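/- The inequality $\Lambda_4 - 4\omega\Lambda_2 < 0$ holds, i.e. $\int_{-\infty}^{\infty} R_0(s)^4\,ds < 4\omega\int_{-\infty}^{\infty} R_0(s)^2\,ds$. -/

import Mathlib

open MeasureTheory

lemma aux_cosh_quad (y : ℝ) : 1 + y ^ 2 / 2 ≤ Real.cosh y := by
  have h2 := Real.cosh_two_mul (y / 2)
  have hsq := Real.cosh_sq (y / 2)
  have h1 : Real.cosh y = 1 + 2 * Real.sinh (y / 2) ^ 2 := by
    rw [show y = 2 * (y / 2) by ring, h2, hsq]; ring
  have h3 : |y| / 2 ≤ Real.sinh (|y| / 2) :=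
    Real.self_le_sinh_iff.mpr (by positivity)
  have h4 : Real.sinh (y / 2) ^ 2 = Real.sinh (|y| / 2) ^ 2 := by
    rw [← sq_abs (Real.sinh (y / 2)), Real.abs_sinh, abs_div]
    norm_num
  have h5 : (|y| / 2) ^ 2 ≤ Real.sinh (|y| / 2) ^ 2 := by
    have : (0 : ℝ) ≤ |y| / 2 := by positivity
    nlinarith
  have h6 : (|y| / 2) ^ 2 = y ^ 2 / 4 := by
    rw [div_pow, sq_abs]; ring
  nlinarith [h1, h4, h5, h6]

/-- `Λ₄ - 4ω Λ₂ < 0`, i.e. `∫ R₀⁴ < 4ω ∫ R₀²`. -/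
theorem stmt10 (ω α β : ℝ) (hω : 0 < ω) (hβ : β = -(16 / 3) * α * ω)
    (hβ0 : 0 ≤ β) (hβ1 : β < 1)
    (R0 : ℝ → ℝ)
    (hR0 : ∀ z : ℝ, R0 z =
      Real.sqrt (4 * ω / (1 + Real.sqrt (1 - β) * Real.cosh (2 * Real.sqrt ω * z)))) :
    (∫ s : ℝ, (R0 s) ^ 4) < 4 * ω * ∫ s : ℝ, (R0 s) ^ 2 := by
  set c : ℝ := Real.sqrt (1 - β) with hcdef
  have hc : 0 < c := Real.sqrt_pos.mpr (by linarith)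
  set D : ℝ → ℝ := fun z => 1 + c * Real.cosh (2 * Real.sqrt ω * z) with hDdef
  have hD1 : ∀ z, 1 + c ≤ D z := by
    intro z
    have := Real.one_le_cosh (2 * Real.sqrt ω * z)
    simp only [hDdef]
    nlinarith
  have hD : ∀ z, 0 < D z := fun z => lt_of_lt_of_le (by linarith) (hD1 z)
  have hDgt1 : ∀ z, 1 < D z := fun z => lt_of_lt_of_le (by linarith) (hD1 z)
  have hsq : ∀ z, R0 z ^ 2 = 4 * ω / D z := by
    intro z
    rw [hR0 z]
    exact Real.sq_sqrt (div_nonneg (by positivity) (hD z).le)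
  have hqpos : ∀ z, 0 < R0 z ^ 2 := fun z => by
    rw [hsq z]; exact div_pos (by positivity) (hD z)
  have hqlt : ∀ z, R0 z ^ 2 < 4 * ω := fun z => by
    rw [hsq z]; exact div_lt_self (by positivity) (hDgt1 z)
  -- continuity
  have hcontD : Continuous D := by
    apply continuous_const.add
    exact continuous_const.mul (Real.continuous_cosh.comp (continuous_const.mul continuous_id))
  have hcontq : Continuous fun z => R0 z ^ 2 := by
    have h : Continuous fun z : ℝ => 4 * ω / D z :=
      Continuous.div continuous_const hcontD fun z => (hD z).ne'
    exact h.congr fun z => (hsq z).symm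
  have hcont4 : Continuous fun z => R0 z ^ 4 := by
    have h := hcontq.pow 2
    exact h.congr fun z => by show (R0 z ^ 2) ^ 2 = _; ring
  -- integrability of R0^2 via bound by (1+z^2)⁻¹
  set a : ℝ := min 1 (2 * ω) with hadef
  have ha : 0 < a := lt_min one_pos (by linarith)
  have hDlow : ∀ z, c * a * (1 + z ^ 2) ≤ D z := by
    intro z
    have hcosh := aux_cosh_quad (2 * Real.sqrt ω * z)
    have hs : Real.sqrt ω ^ 2 = ω := Real.sq_sqrt hω.le
    have h1 : (2 * Real.sqrt ω * z) ^ 2 = 4 * ω * z ^ 2 := by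
      have : (2 * Real.sqrt ω * z) ^ 2 = 4 * Real.sqrt ω ^ 2 * z ^ 2 := by ring
      rw [this, hs]
    have h2 : 1 + 2 * ω * z ^ 2 ≤ Real.cosh (2 * Real.sqrt ω * z) := by
      rw [← h1] at *; nlinarith
    have ha1 : a ≤ 1 := min_le_left _ _
    have ha2 : a ≤ 2 * ω := min_le_right _ _
    have : a * (1 + z ^ 2) ≤ 1 + 2 * ω * z ^ 2 := by nlinarith [sq_nonneg z]
    simp only [hDdef]
    nlinarith [Real.one_le_cosh (2 * Real.sqrt ω * z)]
  have hbound : ∀ z, R0 z ^ 2 ≤ 4 * ω / (c * a) * (1 + z ^ 2)⁻¹ := by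
    intro z
    rw [hsq z, ← div_eq_mul_inv, div_div]
    exact div_le_div_of_nonneg_left (by positivity) (by positivity) (hDlow z)
  have hint2 : Integrable (fun z => R0 z ^ 2) := by
    refine Integrable.mono' (integrable_inv_one_add_sq.const_mul (4 * ω / (c * a)))
      hcontq.aestronglyMeasurable (ae_of_all _ fun z => ?_)
    rw [Real.norm_eq_abs, abs_of_nonneg (sq_nonneg (R0 z))]
    exact hbound z
  have hint4 : Integrable (fun z => R0 z ^ 4) := by
    refine Integrable.mono' (hint2.const_mul (4 * ω))
      hcont4.aestronglyMeasurable (ae_of_all _ fun z => ?_)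
    rw [Real.norm_eq_abs, abs_of_nonneg (by positivity)]
    nlinarith [hqpos z, hqlt z]
  -- strict inequality via positivity of the difference
  have hkey : 0 < ∫ s : ℝ, (4 * ω * R0 s ^ 2 - R0 s ^ 4) := by
    have hnn : ∀ s, 0 < 4 * ω * R0 s ^ 2 - R0 s ^ 4 := by
      intro s; nlinarith [hqpos s, hqlt s]
    rw [integral_pos_iff_support_of_nonneg (fun s => (hnn s).le)
      ((hint2.const_mul (4 * ω)).sub hint4)]
    have hsupp : Function.support (fun s : ℝ => 4 * ω * R0 s ^ 2 - R0 s ^ 4) = Set.univ :=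
      Set.eq_univ_of_forall fun s => (hnn s).ne'
    rw [hsupp]
    simp
  have heq : (∫ s : ℝ, (4 * ω * R0 s ^ 2 - R0 s ^ 4))
      = 4 * ω * (∫ s : ℝ, R0 s ^ 2) - ∫ s : ℝ, R0 s ^ 4 := by
    rw [integral_sub (hint2.const_mul (4 * ω)) hint4, integral_const_mul]
  linarith [hkey, heq ▸ hkey]
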